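/- Let E ⊂ ℝ^d be compact and convex, let K = {k_1,…,k_N} ⊂ E, let ℓ : E → E be Lipschitz in the ℓ¹ norm with constant ‖ℓ‖_Lip, set v_i = ℓ(k_i), and let a : E × E → ℝ be a similarity function such that G(x,y) = exp(a(x,y)) satisfies G(x,y) ≥ ε(G) > 0 and ‖G‖_{Lip,∞} := sup_{y∈E} ‖G(·,y)‖_Lip < ∞. Define Attention(q,K,V) = Σ_{j=1}^N [exp(a(q,k_j)) / Σ_{p=1}^N exp(a(q,k_p))] · v_j. Then for all q_1, q_2 ∈ E: ‖Attention(q_1,K,V) − Attention(q_2,K,V)‖₂ ≤ d^{3/2} · ‖ℓ‖_Lip · (2‖G‖_{Lip,∞} diam(E) / ε(G)) · ‖q_1 − q_2‖₂. -/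

import Mathlib

open MeasureTheory Filter
open scoped NNReal ENNReal

noncomputable section

/-- ℓ¹ distance on `ℝ^d`. -/
def l1dist {d : ℕ} (x y : Fin d → ℝ) : ℝ := ∑ i, |x i - y i|

/-- The set of couplings of two measures. -/
def couplings {α : Type*} [MeasurableSpace α] (μ ν : Measure α) : Set (Measure (α × α)) :=
  {π | IsProbabilityMeasure π ∧ π.map Prod.fst = μ ∧ π.map Prod.snd = ν}

/-- Optimal transport cost with ground cost `c`. -/
def Wcost {α : Type*} [MeasurableSpace α] (c : α → α → ℝ) (μ ν : Measure α) : ℝ :=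
  sInf ((fun π : Measure (α × α) => ∫ p, c p.1 p.2 ∂π) '' couplings μ ν)

/-- 1-Wasserstein distance on `ℝ^d` with ℓ¹ ground cost. -/
def W1 {d : ℕ} (μ ν : Measure (Fin d → ℝ)) : ℝ := Wcost l1dist μ ν

/-- Boltzmann–Gibbs transformation `Ψ_g(ν)(dx) = g(x) ν(dx) / ν(g)`. -/
def BG {d : ℕ} (g : (Fin d → ℝ) → ℝ) (ν : Measure (Fin d → ℝ)) : Measure (Fin d → ℝ) :=
  ν.withDensity (fun x => ENNReal.ofReal (g x / ∫ y, g y ∂ν))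

/-- Real-valued Kullback–Leibler divergence `∫ log(dμ/dν) dμ`
(the generalized entropy of the paper is `H_ν(μ) = -KL μ ν`). -/
def KL {α : Type*} [MeasurableSpace α] (μ ν : Measure α) : ℝ :=
  ∫ x, Real.log ((μ.rnDeriv ν x).toReal) ∂μ

/-- Convolution of two measures on `ℝ^d`. -/
def mconv {d : ℕ} (μ ν : Measure (Fin d → ℝ)) : Measure (Fin d → ℝ) :=
  (μ.prod ν).map (fun p => p.1 + p.2)

/-- Empirical measure of a finite family of points. -/
def empMeasure {d N : ℕ} (x : Fin N → (Fin d → ℝ)) : Measure (Fin d → ℝ) :=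
  (N : ℝ≥0∞)⁻¹ • ∑ i, Measure.dirac (x i)

/-- Euclidean (ℓ²) distance on `ℝ^d`. -/
def eudist {d : ℕ} (x y : Fin d → ℝ) : ℝ := Real.sqrt (∑ i, (x i - y i) ^ 2)


lemma l1dist_nonneg' {d : ℕ} (x y : Fin d → ℝ) : 0 ≤ l1dist x y :=
  Finset.sum_nonneg fun _ _ => abs_nonneg _

lemma eudist_le_l1dist' {d : ℕ} (x y : Fin d → ℝ) : eudist x y ≤ l1dist x y := by
  have h1 : ∑ i, (x i - y i) ^ 2 ≤ (∑ i, |x i - y i|) ^ 2 := by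
    have := Finset.sum_sq_le_sq_sum_of_nonneg (s := Finset.univ)
      (f := fun i => |x i - y i|) (fun i _ => abs_nonneg _)
    simpa [sq_abs] using this
  calc eudist x y ≤ Real.sqrt ((∑ i, |x i - y i|) ^ 2) := Real.sqrt_le_sqrt h1
    _ = l1dist x y := Real.sqrt_sq (l1dist_nonneg' x y)

lemma l1dist_le_sqrt_mul_eudist' {d : ℕ} (x y : Fin d → ℝ) :
    l1dist x y ≤ Real.sqrt d * eudist x y := by
  have h : (∑ i, |x i - y i|) ^ 2 ≤ (d : ℝ) * ∑ i, (x i - y i) ^ 2 := by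
    have := sq_sum_le_card_mul_sum_sq (s := Finset.univ) (f := fun i : Fin d => |x i - y i|)
    simpa [sq_abs] using this
  calc l1dist x y = Real.sqrt ((∑ i, |x i - y i|) ^ 2) :=
        (Real.sqrt_sq (l1dist_nonneg' x y)).symm
    _ ≤ Real.sqrt ((d : ℝ) * ∑ i, (x i - y i) ^ 2) := Real.sqrt_le_sqrt h
    _ = Real.sqrt d * eudist x y := Real.sqrt_mul (by positivity) _

lemma sqrt_le_rpow_three_halves (d : ℕ) : Real.sqrt d ≤ (d : ℝ) ^ ((3 : ℝ) / 2) := by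
  rcases Nat.eq_zero_or_pos d with rfl | hd
  · simp
  · have h1 : (1 : ℝ) ≤ (d : ℝ) := by exact_mod_cast hd
    rw [Real.sqrt_eq_rpow]
    exact Real.rpow_le_rpow_of_exponent_le h1 (by norm_num)

/-- the attention map `q ↦ Attention(q,K,V)` with values `v_j = ℓ(k_j)` and
potential `G(x,y) = exp(a(x,y))` is Lipschitz for the Euclidean distance with constant
`d^{3/2} · ‖ℓ‖_Lip · 2‖G‖_{Lip,∞} diam(E) / ε(G)`.
Here `Kl` is the constant `‖ℓ‖_Lip`, `CG` the constant `‖G‖_{Lip,∞}`, and `D` the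
ℓ¹-diameter of `E`. -/
theorem statement9 {d N : ℕ} (hN : 0 < N)
    (E : Set (Fin d → ℝ)) (hEc : IsCompact E) (hEconv : Convex ℝ E)
    (k : Fin N → (Fin d → ℝ)) (hk : ∀ i, k i ∈ E)
    (ℓ : (Fin d → ℝ) → (Fin d → ℝ)) (hℓE : Set.MapsTo ℓ E E)
    (Kl : ℝ) (hℓLip : ∀ x ∈ E, ∀ y ∈ E, l1dist (ℓ x) (ℓ y) ≤ Kl * l1dist x y)
    (a : (Fin d → ℝ) → (Fin d → ℝ) → ℝ)
    (ε : ℝ) (hε : 0 < ε) (hGlb : ∀ x ∈ E, ∀ y ∈ E, ε ≤ Real.exp (a x y))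
    (CG : ℝ)
    (hGLip : ∀ y ∈ E, ∀ x ∈ E, ∀ x' ∈ E,
      |Real.exp (a x y) - Real.exp (a x' y)| ≤ CG * l1dist x x')
    (D : ℝ) (hD : ∀ x ∈ E, ∀ y ∈ E, l1dist x y ≤ D)
    (Att : (Fin d → ℝ) → (Fin d → ℝ))
    (hAtt : ∀ q, Att q = ∑ j, (Real.exp (a q (k j)) / ∑ p, Real.exp (a q (k p))) • ℓ (k j))
    (q1 q2 : Fin d → ℝ) (hq1 : q1 ∈ E) (hq2 : q2 ∈ E) :
    eudist (Att q1) (Att q2)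
      ≤ (d : ℝ) ^ ((3 : ℝ) / 2) * Kl * (2 * CG * D / ε) * eudist q1 q2 := by
  rcases eq_or_ne q1 q2 with rfl | hne
  · simp [eudist]
  haveI : Nonempty (Fin N) := ⟨⟨0, hN⟩⟩
  set L := l1dist q1 q2 with hLdef
  have hLpos : 0 < L := by
    obtain ⟨i, hi⟩ := Function.ne_iff.mp hne
    exact Finset.sum_pos' (fun j _ => abs_nonneg _)
      ⟨i, Finset.mem_univ i, abs_pos.mpr (sub_ne_zero.mpr hi)⟩
  have hKl : 0 ≤ Kl := by
    have h1 := hℓLip q1 hq1 q2 hq2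
    nlinarith [l1dist_nonneg' (ℓ q1) (ℓ q2)]
  have hCG : 0 ≤ CG := by
    have h1 := hGLip (k ⟨0, hN⟩) (hk _) q1 hq1 q2 hq2
    nlinarith [abs_nonneg (Real.exp (a q1 (k ⟨0, hN⟩)) - Real.exp (a q2 (k ⟨0, hN⟩)))]
  have hD0 : 0 ≤ D := by
    have h0 : l1dist q1 q1 = 0 := by simp [l1dist]
    have := hD q1 hq1 q1 hq1
    linarith
  set G1 : Fin N → ℝ := fun j => Real.exp (a q1 (k j)) with hG1def
  set G2 : Fin N → ℝ := fun j => Real.exp (a q2 (k j)) with hG2def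
  set S1 : ℝ := ∑ p, G1 p with hS1def
  set S2 : ℝ := ∑ p, G2 p with hS2def
  have hS1 : (N : ℝ) * ε ≤ S1 := by
    calc (N : ℝ) * ε = ∑ _p : Fin N, ε := by simp [mul_comm]
      _ ≤ S1 := Finset.sum_le_sum fun p _ => hGlb q1 hq1 (k p) (hk p)
  have hS1pos : 0 < S1 := lt_of_lt_of_le (by positivity) hS1
  have hS2pos : 0 < S2 := Finset.sum_pos (fun p _ => Real.exp_pos _) Finset.univ_nonempty
  set w1 : Fin N → ℝ := fun j => G1 j / S1 with hw1def
  set w2 : Fin N → ℝ := fun j => G2 j / S2 with hw2def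
  set T : ℝ := ∑ j, |G1 j - G2 j| with hTdef
  have hT : T ≤ (N : ℝ) * (CG * L) := by
    calc T ≤ ∑ _j : Fin N, CG * L :=
          Finset.sum_le_sum fun j _ => hGLip (k j) (hk j) q1 hq1 q2 hq2
      _ = (N : ℝ) * (CG * L) := by simp [mul_comm]
  have hS12 : |S2 - S1| ≤ T := by
    have h1 : S2 - S1 = ∑ j, (G2 j - G1 j) := by
      rw [hS1def, hS2def, Finset.sum_sub_distrib]
    rw [h1]
    calc |∑ j, (G2 j - G1 j)| ≤ ∑ j, |G2 j - G1 j| := Finset.abs_sum_le_sum_abs _ _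
      _ = T := by simp [hTdef, abs_sub_comm]
  have hΔ : ∀ j, |w1 j - w2 j| ≤ |G1 j - G2 j| / S1 + G2 j * |S2 - S1| / (S1 * S2) := by
    intro j
    have heq : w1 j - w2 j = (G1 j - G2 j) / S1 + G2 j * (S2 - S1) / (S1 * S2) := by
      show G1 j / S1 - G2 j / S2 = _
      rw [div_sub_div _ _ hS1pos.ne' hS2pos.ne',
        div_add_div _ _ hS1pos.ne' (mul_pos hS1pos hS2pos).ne',
        div_eq_div_iff (mul_pos hS1pos hS2pos).ne'
          (mul_pos hS1pos (mul_pos hS1pos hS2pos)).ne']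
      ring
    rw [heq]
    refine (abs_add_le _ _).trans ?_
    have hG2pos : 0 < G2 j := Real.exp_pos _
    rw [abs_div, abs_div, abs_mul, abs_of_pos hS1pos, abs_of_pos (mul_pos hS1pos hS2pos),
      abs_of_pos hG2pos]
  have hWsum : ∑ j, |w1 j - w2 j| ≤ 2 * (CG * L) / ε := by
    have h1 : ∑ j, |w1 j - w2 j| ≤ T / S1 + |S2 - S1| / S1 := by
      calc ∑ j, |w1 j - w2 j|
          ≤ ∑ j, (|G1 j - G2 j| / S1 + G2 j * |S2 - S1| / (S1 * S2)) :=
            Finset.sum_le_sum fun j _ => hΔ j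
        _ = T / S1 + S2 * |S2 - S1| / (S1 * S2) := by
            rw [Finset.sum_add_distrib, ← Finset.sum_div]
            congr 1
            rw [← Finset.sum_div, ← Finset.sum_mul]
        _ = T / S1 + |S2 - S1| / S1 := by
            congr 1
            rw [div_eq_div_iff (mul_pos hS1pos hS2pos).ne' hS1pos.ne']
            ring
    have h2 : T / S1 + |S2 - S1| / S1 ≤ 2 * T / S1 := by
      rw [← add_div]
      gcongr
      linarith
    have h3 : 2 * T / S1 ≤ 2 * (CG * L) / ε := by
      rw [div_le_div_iff₀ hS1pos hε]
      nlinarith [mul_le_mul_of_nonneg_right hT hε.le,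
        mul_le_mul_of_nonneg_left hS1 (mul_nonneg hCG hLpos.le)]
    linarith
  set v0 : Fin d → ℝ := ℓ (k ⟨0, hN⟩) with hv0def
  have hsum1 : ∑ j, w1 j = 1 := by
    rw [hw1def]
    rw [← Finset.sum_div]
    exact div_self hS1pos.ne'
  have hsum2 : ∑ j, w2 j = 1 := by
    rw [hw2def]
    rw [← Finset.sum_div]
    exact div_self hS2pos.ne'
  have hA : ∀ i, Att q1 i = ∑ j, w1 j * ℓ (k j) i ∧ Att q2 i = ∑ j, w2 j * ℓ (k j) i := by
    intro i
    constructor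
    · rw [hAtt]
      simp only [Finset.sum_apply, Pi.smul_apply, smul_eq_mul]
      rfl
    · rw [hAtt]
      simp only [Finset.sum_apply, Pi.smul_apply, smul_eq_mul]
      rfl
  have hkey : ∀ i, Att q1 i - Att q2 i = ∑ j, (w1 j - w2 j) * (ℓ (k j) i - v0 i) := by
    intro i
    have expand : (∑ j, w1 j * ℓ (k j) i) - (∑ j, w2 j * ℓ (k j) i)
          - ((∑ j, w1 j) - (∑ j, w2 j)) * v0 i
        = ∑ j, (w1 j - w2 j) * (ℓ (k j) i - v0 i) := by
      rw [← Finset.sum_sub_distrib, sub_mul, Finset.sum_mul, Finset.sum_mul,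
        ← Finset.sum_sub_distrib, ← Finset.sum_sub_distrib]
      exact Finset.sum_congr rfl fun j _ => by ring
    rw [← expand, hsum1, hsum2, (hA i).1, (hA i).2]
    ring
  have hcoord : ∀ i, |Att q1 i - Att q2 i| ≤ ∑ j, |w1 j - w2 j| * |ℓ (k j) i - v0 i| := by
    intro i
    rw [hkey i]
    refine (Finset.abs_sum_le_sum_abs _ _).trans ?_
    exact Finset.sum_le_sum fun j _ => le_of_eq (abs_mul _ _)
  have hl1Att : l1dist (Att q1) (Att q2) ≤ (2 * (CG * L) / ε) * (Kl * D) := by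
    have step1 : l1dist (Att q1) (Att q2) ≤ ∑ j, |w1 j - w2 j| * (Kl * D) := by
      calc l1dist (Att q1) (Att q2) = ∑ i, |Att q1 i - Att q2 i| := rfl
        _ ≤ ∑ i, ∑ j, |w1 j - w2 j| * |ℓ (k j) i - v0 i| :=
            Finset.sum_le_sum fun i _ => hcoord i
        _ = ∑ j, ∑ i, |w1 j - w2 j| * |ℓ (k j) i - v0 i| := Finset.sum_comm
        _ = ∑ j, |w1 j - w2 j| * l1dist (ℓ (k j)) v0 := by
            refine Finset.sum_congr rfl fun j _ => ?_
            rw [← Finset.mul_sum]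
            rfl
        _ ≤ ∑ j, |w1 j - w2 j| * (Kl * D) := by
            refine Finset.sum_le_sum fun j _ => ?_
            refine mul_le_mul_of_nonneg_left ?_ (abs_nonneg _)
            calc l1dist (ℓ (k j)) v0 ≤ Kl * l1dist (k j) (k ⟨0, hN⟩) :=
                  hℓLip (k j) (hk j) (k ⟨0, hN⟩) (hk _)
              _ ≤ Kl * D := mul_le_mul_of_nonneg_left (hD (k j) (hk j) (k ⟨0, hN⟩) (hk _)) hKl
    calc l1dist (Att q1) (Att q2) ≤ ∑ j, |w1 j - w2 j| * (Kl * D) := step1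
      _ = (∑ j, |w1 j - w2 j|) * (Kl * D) := by rw [Finset.sum_mul]
      _ ≤ (2 * (CG * L) / ε) * (Kl * D) :=
          mul_le_mul_of_nonneg_right hWsum (mul_nonneg hKl hD0)
  have hL2 : L ≤ Real.sqrt d * eudist q1 q2 := l1dist_le_sqrt_mul_eudist' q1 q2
  have hsd : Real.sqrt d ≤ (d : ℝ) ^ ((3 : ℝ) / 2) := sqrt_le_rpow_three_halves d
  have heu := eudist_le_l1dist' (Att q1) (Att q2)
  have heupos : 0 ≤ eudist q1 q2 := Real.sqrt_nonneg _
  have hconst : 0 ≤ 2 * CG * Kl * D / ε := by positivity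
  calc eudist (Att q1) (Att q2) ≤ l1dist (Att q1) (Att q2) := heu
    _ ≤ (2 * (CG * L) / ε) * (Kl * D) := hl1Att
    _ = (2 * CG * Kl * D / ε) * L := by ring
    _ ≤ (2 * CG * Kl * D / ε) * (Real.sqrt d * eudist q1 q2) :=
        mul_le_mul_of_nonneg_left hL2 hconst
    _ = Real.sqrt d * ((2 * CG * Kl * D / ε) * eudist q1 q2) := by ring
    _ ≤ (d : ℝ) ^ ((3 : ℝ) / 2) * ((2 * CG * Kl * D / ε) * eudist q1 q2) :=
        mul_le_mul_of_nonneg_right hsd (by positivity)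
    _ = (d : ℝ) ^ ((3 : ℝ) / 2) * Kl * (2 * CG * D / ε) * eudist q1 q2 := by
        field_simp
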